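/- Let α ∈ (0,1) and let Q be a probability measure on ℝ with finite first moment. Define f : ℝ → ℝ by f(t) = ∫ ρ_α(y,t) dQ(y). Then the set of minimizers of f over ℝ is nonempty and equals the α-quantile set of Q, i.e. {t ∈ ℝ : Q((−∞,t]) ≥ α and Q([t,∞)) ≥ 1−α}. -/

import Mathlib

open MeasureTheory Real

/-- The quantile (pinball) loss of a prediction `t` for an outcome `y` at level `α`. -/
noncomputable def pinball (α y t : ℝ) : ℝ :=
  if t < y then α * (y - t) else (1 - α) * (t - y)

lemma pinball_meas (α t : ℝ) : Measurable (fun y => pinball α y t) := by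
  unfold pinball
  exact Measurable.ite (measurableSet_lt measurable_const measurable_id)
    (measurable_const.mul (measurable_id.sub measurable_const))
    (measurable_const.mul (measurable_const.sub measurable_id))

lemma pinball_integrable {α : ℝ} (hα0 : 0 ≤ α) (hα1 : α ≤ 1) (Q : Measure ℝ)
    [IsProbabilityMeasure Q] (hm : Integrable (fun y : ℝ => y) Q) (t : ℝ) :
    Integrable (fun y => pinball α y t) Q := by
  apply Integrable.mono' ((hm.sub (integrable_const t)).abs)
    ((pinball_meas α t).aestronglyMeasurable)
  filter_upwards with y
  simp only [Real.norm_eq_abs, Pi.sub_apply]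
  unfold pinball
  split_ifs with h
  · rw [abs_of_nonneg (mul_nonneg hα0 (by linarith)), abs_of_pos (by linarith : (0:ℝ) < y - t)]
    nlinarith
  · push_neg at h
    rw [abs_of_nonneg (mul_nonneg (by linarith) (by linarith)),
      abs_of_nonpos (by linarith : y - t ≤ 0)]
    nlinarith

lemma diff_formula {α : ℝ} (hα0 : 0 ≤ α) (hα1 : α ≤ 1) (Q : Measure ℝ)
    [IsProbabilityMeasure Q] (hm : Integrable (fun y : ℝ => y) Q) {t s : ℝ} (hts : t ≤ s) :
    (∫ y, pinball α y s ∂Q) - ∫ y, pinball α y t ∂Q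
      = (s - t) * ((Q (Set.Iic t)).toReal - α) + ∫ y in Set.Ioc t s, (s - y) ∂Q := by
  have hint := fun u => pinball_integrable hα0 hα1 Q hm u
  rw [← integral_sub (hint s) (hint t)]
  set d : ℝ → ℝ := fun y => pinball α y s - pinball α y t with hd
  have hdint : Integrable d Q := (hint s).sub (hint t)
  have hu : Set.Iic t ∪ (Set.Ioc t s ∪ Set.Ioi s) = Set.univ := by
    rw [← Set.union_assoc, Set.Iic_union_Ioc_eq_Iic hts, Set.Iic_union_Ioi]
  have hdisj1 : Disjoint (Set.Iic t) (Set.Ioc t s ∪ Set.Ioi s) := by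
    rw [Set.disjoint_union_right]
    exact ⟨Set.Iic_disjoint_Ioc le_rfl, (Set.Iic_disjoint_Ioi hts)⟩
  have hdisj2 : Disjoint (Set.Ioc t s) (Set.Ioi s) := Set.Ioc_disjoint_Ioi le_rfl
  have hsplit : ∫ y, d y ∂Q = (∫ y in Set.Iic t, d y ∂Q) + ((∫ y in Set.Ioc t s, d y ∂Q)
      + ∫ y in Set.Ioi s, d y ∂Q) := by
    rw [← setIntegral_union hdisj2 measurableSet_Ioi hdint.integrableOn hdint.integrableOn,
      ← setIntegral_union hdisj1 (measurableSet_Ioc.union measurableSet_Ioi)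
        hdint.integrableOn hdint.integrableOn, hu, setIntegral_univ]
  rw [hsplit]
  have h1 : ∫ y in Set.Iic t, d y ∂Q = (Q (Set.Iic t)).toReal * ((1 - α) * (s - t)) := by
    rw [setIntegral_congr_fun measurableSet_Iic (g := fun _ => (1 - α) * (s - t)) ?_,
      setIntegral_const, smul_eq_mul, measureReal_def]
    intro y hy
    simp only [Set.mem_Iic] at hy
    simp only [hd, pinball, if_neg (by linarith : ¬ s < y), if_neg (by linarith : ¬ t < y)]
    ring
  have h3 : ∫ y in Set.Ioi s, d y ∂Q = (Q (Set.Ioi s)).toReal * (-(α * (s - t))) := by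
    rw [setIntegral_congr_fun measurableSet_Ioi (g := fun _ => -(α * (s - t))) ?_,
      setIntegral_const, smul_eq_mul, measureReal_def]
    intro y hy
    simp only [Set.mem_Ioi] at hy
    simp only [hd, pinball, if_pos (by linarith : s < y), if_pos (by linarith : t < y)]
    ring
  have h2 : ∫ y in Set.Ioc t s, d y ∂Q
      = (∫ y in Set.Ioc t s, (s - y) ∂Q) - (Q (Set.Ioc t s)).toReal * (α * (s - t)) := by
    rw [setIntegral_congr_fun measurableSet_Ioc (g := fun y => (s - y) - α * (s - t)) ?_]
    · rw [integral_sub (((integrable_const s).sub hm).congr (Filter.Eventually.of_forall fun y => rfl) : Integrable (fun y => s - y) Q).integrableOn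
        (integrable_const _).integrableOn, setIntegral_const, smul_eq_mul, measureReal_def]
    · intro y hy
      simp only [Set.mem_Ioc] at hy
      simp only [hd, pinball, if_neg (by linarith : ¬ s < y), if_pos (by linarith : t < y)]
      ring
  rw [h1, h2, h3]
  have hmeas : Q (Set.Iic t) + (Q (Set.Ioc t s) + Q (Set.Ioi s)) = 1 := by
    rw [← measure_union hdisj2 measurableSet_Ioi,
      ← measure_union hdisj1 (measurableSet_Ioc.union measurableSet_Ioi), hu, measure_univ]
  have hsum : (Q (Set.Iic t)).toReal + (Q (Set.Ioc t s)).toReal + (Q (Set.Ioi s)).toReal = 1 := by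
    have h' : ((Q (Set.Iic t)) + (Q (Set.Ioc t s) + Q (Set.Ioi s))).toReal = 1 := by
      rw [hmeas]; rfl
    rw [ENNReal.toReal_add (measure_ne_top _ _)
        (ENNReal.add_ne_top.2 ⟨measure_ne_top _ _, measure_ne_top _ _⟩),
      ENNReal.toReal_add (measure_ne_top _ _) (measure_ne_top _ _)] at h'
    linarith
  linear_combination (t - s) * α * hsum

-- measure of Iio as limit from the left
lemma Iio_split (Q : Measure ℝ) [IsProbabilityMeasure Q] {s t : ℝ} (h : s < t) :
    (Q (Set.Iic s)).toReal + (Q (Set.Ioo s t)).toReal = (Q (Set.Iio t)).toReal := by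
  have hdisj : Disjoint (Set.Iic s) (Set.Ioo s t) := by
    rw [Set.disjoint_left]
    rintro x hx ⟨h1, h2⟩
    exact absurd hx (not_le.2 h1)
  rw [← ENNReal.toReal_add (measure_ne_top _ _) (measure_ne_top _ _),
    ← measure_union hdisj measurableSet_Ioo, Set.Iic_union_Ioo_eq_Iio h]

lemma min_of_quantile {α : ℝ} (hα0 : 0 ≤ α) (hα1 : α ≤ 1) (Q : Measure ℝ)
    [IsProbabilityMeasure Q] (hm : Integrable (fun y : ℝ => y) Q) {t : ℝ}
    (hq1 : α ≤ (Q (Set.Iic t)).toReal) (hq2 : (Q (Set.Iio t)).toReal ≤ α) (s : ℝ) :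
    (∫ y, pinball α y t ∂Q) ≤ ∫ y, pinball α y s ∂Q := by
  rcases le_or_gt t s with hts | hst
  · have hf := diff_formula hα0 hα1 Q hm hts
    have hI : 0 ≤ ∫ y in Set.Ioc t s, (s - y) ∂Q :=
      setIntegral_nonneg measurableSet_Ioc fun y hy => by linarith [hy.2]
    nlinarith [sub_nonneg.2 hts]
  · have hf := diff_formula hα0 hα1 Q hm hst.le
    -- f t - f s = (t-s)*(Fr s - α) + ∫_{Ioc s t} (t - y)
    have hIoc : Set.Ioo s t ∪ {t} = Set.Ioc s t := Set.Ioo_union_right hst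
    have hdisj : Disjoint (Set.Ioo s t) ({t} : Set ℝ) := by
      rw [Set.disjoint_singleton_right]
      rintro ⟨-, h2⟩; exact lt_irrefl t h2
    have hints : IntegrableOn (fun y => t - y) (Set.Ioo s t) Q ∧
        IntegrableOn (fun y => t - y) ({t} : Set ℝ) Q := by
      have : Integrable (fun y : ℝ => t - y) Q :=
        ((integrable_const t).sub hm).congr (Filter.Eventually.of_forall fun y => rfl)
      exact ⟨this.integrableOn, this.integrableOn⟩
    have hsplit : ∫ y in Set.Ioc s t, (t - y) ∂Q
        = (∫ y in Set.Ioo s t, (t - y) ∂Q) + ∫ y in ({t} : Set ℝ), (t - y) ∂Q := by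
      rw [← setIntegral_union hdisj (measurableSet_singleton t) hints.1 hints.2, hIoc]
    have hsing : ∫ y in ({t} : Set ℝ), (t - y) ∂Q = 0 := by
      rw [setIntegral_congr_fun (measurableSet_singleton t) (g := fun _ => (0:ℝ))
        (fun y hy => by simp at hy; simp [hy]), setIntegral_const, smul_zero]
    have hbound : ∫ y in Set.Ioo s t, (t - y) ∂Q
        ≤ (Q (Set.Ioo s t)).toReal * (t - s) := by
      have := setIntegral_mono_on hints.1 (integrable_const (t - s)).integrableOn
        measurableSet_Ioo (fun y hy => by linarith [hy.1])
      rwa [setIntegral_const, smul_eq_mul, measureReal_def] at this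
    have hIio := Iio_split Q hst
    have h1 : α ≤ 1 := hα1
    -- f t - f s ≤ (t-s)*((Q (Iic s)).toReal - α) + (t-s)*Q(Ioo s t) = (t-s)*(Qr(Iio t) - α) ≤ 0
    nlinarith [sub_pos.2 hst, hq2, hf, hsplit, hsing, hbound,
      mul_nonneg (sub_pos.2 hst).le (sub_nonneg.2 hq2)]

lemma quantile_of_min {α : ℝ} (hα : α ∈ Set.Ioo (0:ℝ) 1) (Q : Measure ℝ)
    [IsProbabilityMeasure Q] (hm : Integrable (fun y : ℝ => y) Q) {t : ℝ}
    (hmin : ∀ s : ℝ, (∫ y, pinball α y t ∂Q) ≤ ∫ y, pinball α y s ∂Q) :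
    α ≤ (Q (Set.Iic t)).toReal ∧ (Q (Set.Iio t)).toReal ≤ α := by
  obtain ⟨hα0, hα1⟩ := hα
  constructor
  · by_contra hc
    push_neg at hc
    set ε := α - (Q (Set.Iic t)).toReal with hε
    have hεpos : 0 < ε := by linarith
    -- Q (Ioc t (t + 1/(n+1))) → 0
    have hten : Filter.Tendsto (fun n : ℕ => Q (Set.Ioc t (t + 1 / (n + 1)))) Filter.atTop
        (nhds 0) := by
      have hi : ⋂ n : ℕ, Set.Ioc t (t + 1 / (n + 1)) = ∅ := by
        rw [Set.eq_empty_iff_forall_notMem]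
        intro y hy
        simp only [Set.mem_iInter, Set.mem_Ioc] at hy
        obtain ⟨n, hn⟩ := exists_nat_one_div_lt (sub_pos.2 (hy 0).1)
        linarith [(hy n).2]
      have := tendsto_measure_iInter_atTop
        (μ := Q) (s := fun n : ℕ => Set.Ioc t (t + 1 / (n + 1)))
        (fun n => measurableSet_Ioc.nullMeasurableSet)
        (fun m n hmn => Set.Ioc_subset_Ioc le_rfl (by
          have : (1:ℝ) / (n + 1) ≤ 1 / (m + 1) := by
            apply one_div_le_one_div_of_le (by positivity)
            have hc' : ((m:ℝ)) ≤ n := Nat.cast_le.2 hmn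
            linarith
          linarith))
        ⟨0, measure_ne_top _ _⟩
      rw [hi, measure_empty] at this
      exact this
    have hev : ∀ᶠ n : ℕ in Filter.atTop, Q (Set.Ioc t (t + 1 / (n + 1))) < ENNReal.ofReal ε :=
      hten.eventually_lt_const (by simp [hεpos])
    obtain ⟨n, hn⟩ := hev.exists
    set s := t + 1 / (n + 1 : ℝ) with hs
    have hts : t < s := by
      have h0 : (0:ℝ) < 1 / ((n:ℝ) + 1) := by positivity
      rw [hs]; linarith
    have hf := diff_formula hα0.le hα1.le Q hm hts.le
    have hQr : (Q (Set.Ioc t s)).toReal < ε :=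
      (ENNReal.lt_ofReal_iff_toReal_lt (measure_ne_top _ _)).1 hn
    have hbound : ∫ y in Set.Ioc t s, (s - y) ∂Q ≤ (Q (Set.Ioc t s)).toReal * (s - t) := by
      have hint : IntegrableOn (fun y => s - y) (Set.Ioc t s) Q :=
        (((integrable_const s).sub hm).congr
          (Filter.Eventually.of_forall fun y => rfl) : Integrable (fun y : ℝ => s - y) Q
          ).integrableOn
      have := setIntegral_mono_on hint (integrable_const (s - t)).integrableOn
        measurableSet_Ioc (fun y hy => by linarith [hy.1])
      rwa [setIntegral_const, smul_eq_mul, measureReal_def] at this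
    have : (∫ y, pinball α y s ∂Q) - ∫ y, pinball α y t ∂Q < 0 := by
      rw [hf]
      have h2 : (Q (Set.Iic t)).toReal - α = -ε := by rw [hε]; ring
      nlinarith [sub_pos.2 hts]
    linarith [hmin s]
  · by_contra hc
    push_neg at hc
    have hiU : Set.Iio t = ⋃ n : ℕ, Set.Iic (t - 1 / (n + 1)) := by
      ext y
      simp only [Set.mem_Iio, Set.mem_iUnion, Set.mem_Iic]
      constructor
      · intro h
        obtain ⟨n, hn⟩ := exists_nat_one_div_lt (sub_pos.2 h)
        exact ⟨n, by linarith⟩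
      · rintro ⟨n, hn⟩
        have : (0:ℝ) < 1 / (n + 1) := by positivity
        linarith
    have hmono : Monotone fun n : ℕ => Set.Iic (t - 1 / (n + 1 : ℝ)) := by
      intro m n hmn
      apply Set.Iic_subset_Iic.2
      have : (1:ℝ) / (n + 1) ≤ 1 / (m + 1) := by
        apply one_div_le_one_div_of_le (by positivity)
        have hc' : ((m:ℝ)) ≤ n := Nat.cast_le.2 hmn
        linarith
      linarith
    have hsup : Q (Set.Iio t) = ⨆ n : ℕ, Q (Set.Iic (t - 1 / (n + 1))) := by
      rw [hiU]; exact hmono.measure_iUnion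
    have hlt : ENNReal.ofReal α < Q (Set.Iio t) :=
      (ENNReal.ofReal_lt_iff_lt_toReal hα0.le (measure_ne_top _ _)).2 hc
    rw [hsup, lt_iSup_iff] at hlt
    obtain ⟨n, hn⟩ := hlt
    set s := t - 1 / (n + 1 : ℝ) with hs
    have hst : s < t := by
      have h0 : (0:ℝ) < 1 / ((n:ℝ) + 1) := by positivity
      rw [hs]; linarith
    have hFs : α < (Q (Set.Iic s)).toReal :=
      (ENNReal.ofReal_lt_iff_lt_toReal hα0.le (measure_ne_top _ _)).1 hn
    have hf := diff_formula hα0.le hα1.le Q hm hst.le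
    have hI : 0 ≤ ∫ y in Set.Ioc s t, (t - y) ∂Q :=
      setIntegral_nonneg measurableSet_Ioc fun y hy => by linarith [hy.2]
    have : (∫ y, pinball α y s ∂Q) < ∫ y, pinball α y t ∂Q := by
      nlinarith [sub_pos.2 hst]
    linarith [hmin s]

lemma quantile_exists {α : ℝ} (hα : α ∈ Set.Ioo (0:ℝ) 1) (Q : Measure ℝ)
    [IsProbabilityMeasure Q] :
    ∃ t : ℝ, ENNReal.ofReal α ≤ Q (Set.Iic t) ∧ Q (Set.Iio t) ≤ ENNReal.ofReal α := by
  obtain ⟨hα0, hα1⟩ := hα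
  set S := {t : ℝ | ENNReal.ofReal α ≤ Q (Set.Iic t)} with hS
  have hU : (Set.univ : Set ℝ) = ⋃ n : ℕ, Set.Iic (n:ℝ) := by
    ext y; simp only [Set.mem_univ, true_iff, Set.mem_iUnion, Set.mem_Iic]
    exact exists_nat_ge y
  have hmono1 : Monotone fun n : ℕ => Set.Iic ((n:ℝ)) := fun m n hmn =>
    Set.Iic_subset_Iic.2 (Nat.cast_le.2 hmn)
  have hlt1 : ENNReal.ofReal α < ⨆ n : ℕ, Q (Set.Iic (n:ℝ)) := by
    rw [← hmono1.measure_iUnion, ← hU, measure_univ]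
    exact ENNReal.ofReal_lt_one.2 hα1
  rw [lt_iSup_iff] at hlt1
  obtain ⟨n₀, hn₀⟩ := hlt1
  have hSne : S.Nonempty := ⟨n₀, hn₀.le⟩
  have hiInter : ⋂ n : ℕ, Set.Iic (-(n:ℝ)) = ∅ := by
    rw [Set.eq_empty_iff_forall_notMem]
    intro y hy
    simp only [Set.mem_iInter, Set.mem_Iic] at hy
    obtain ⟨n, hn⟩ := exists_nat_gt (-y)
    linarith [hy n]
  have hten : Filter.Tendsto (fun n : ℕ => Q (Set.Iic (-(n:ℝ)))) Filter.atTop (nhds 0) := by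
    have := tendsto_measure_iInter_atTop (μ := Q) (s := fun n : ℕ => Set.Iic (-(n:ℝ)))
      (fun n => measurableSet_Iic.nullMeasurableSet)
      (fun m n hmn => Set.Iic_subset_Iic.2 (by
        have hc' : ((m:ℝ)) ≤ n := Nat.cast_le.2 hmn
        linarith))
      ⟨0, measure_ne_top _ _⟩
    rw [hiInter, measure_empty] at this; exact this
  obtain ⟨m₀, hm₀⟩ := (hten.eventually_lt_const
    (show (0:ENNReal) < ENNReal.ofReal α by simp [hα0])).exists
  have hbdd : BddBelow S := by
    refine ⟨-(m₀:ℝ), fun x hx => ?_⟩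
    by_contra hcx
    push_neg at hcx
    have hmm : Q (Set.Iic x) ≤ Q (Set.Iic (-(m₀:ℝ))) := measure_mono (Set.Iic_subset_Iic.2 hcx.le)
    exact absurd (lt_of_le_of_lt (le_trans hx hmm) hm₀) (lt_irrefl _)
  refine ⟨sInf S, ?_, ?_⟩
  · have hiI : ⋂ n : ℕ, Set.Iic (sInf S + 1/(n+1)) = Set.Iic (sInf S) := by
      ext y
      simp only [Set.mem_iInter, Set.mem_Iic]
      constructor
      · intro h
        by_contra hy
        push_neg at hy
        obtain ⟨n, hn⟩ := exists_nat_one_div_lt (sub_pos.2 hy)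
        linarith [h n]
      · intro h n
        have : (0:ℝ) < 1/((n:ℝ)+1) := by positivity
        linarith
    have hten2 : Filter.Tendsto (fun n : ℕ => Q (Set.Iic (sInf S + 1/(n+1)))) Filter.atTop
        (nhds (Q (Set.Iic (sInf S)))) := by
      have := tendsto_measure_iInter_atTop (μ := Q)
        (s := fun n : ℕ => Set.Iic (sInf S + 1/(n+1)))
        (fun n => measurableSet_Iic.nullMeasurableSet)
        (fun m n hmn => Set.Iic_subset_Iic.2 (by
          have hc' : ((m:ℝ)) ≤ n := Nat.cast_le.2 hmn
          have h1 : (1:ℝ)/((n:ℝ)+1) ≤ 1/((m:ℝ)+1) :=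
            one_div_le_one_div_of_le (by positivity) (by linarith)
          linarith))
        ⟨0, measure_ne_top _ _⟩
      rw [hiI] at this; exact this
    refine ge_of_tendsto' hten2 fun n => ?_
    have hlt : sInf S < sInf S + 1/(n+1) := by
      have : (0:ℝ) < 1/((n:ℝ)+1) := by positivity
      linarith
    obtain ⟨x, hxS, hx⟩ := (csInf_lt_iff hbdd hSne).1 hlt
    exact le_trans hxS (measure_mono (Set.Iic_subset_Iic.2 hx.le))
  · have hiU2 : Set.Iio (sInf S) = ⋃ n : ℕ, Set.Iic (sInf S - 1/(n+1)) := by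
      ext y
      simp only [Set.mem_Iio, Set.mem_iUnion, Set.mem_Iic]
      constructor
      · intro h
        obtain ⟨n, hn⟩ := exists_nat_one_div_lt (sub_pos.2 h)
        exact ⟨n, by linarith⟩
      · rintro ⟨n, hn⟩
        have : (0:ℝ) < 1/((n:ℝ)+1) := by positivity
        linarith
    have hmono2 : Monotone fun n : ℕ => Set.Iic (sInf S - 1/((n:ℝ)+1)) := by
      intro m n hmn
      apply Set.Iic_subset_Iic.2
      have hc' : ((m:ℝ)) ≤ n := Nat.cast_le.2 hmn
      have h1 : (1:ℝ)/((n:ℝ)+1) ≤ 1/((m:ℝ)+1) :=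
        one_div_le_one_div_of_le (by positivity) (by linarith)
      linarith
    rw [hiU2, hmono2.measure_iUnion]
    apply iSup_le
    intro n
    have hnotS : (sInf S - 1/((n:ℝ)+1)) ∉ S := by
      intro hmem
      have hle := csInf_le hbdd hmem
      have h0 : (0:ℝ) < 1/((n:ℝ)+1) := by positivity
      linarith
    exact (not_le.1 hnotS).le

/-- The `α`-quantile set of a measure `Q` on `ℝ`. -/
def quantileSet (α : ℝ) (Q : Measure ℝ) : Set ℝ :=
  {t : ℝ | ENNReal.ofReal α ≤ Q (Set.Iic t) ∧ ENNReal.ofReal (1 - α) ≤ Q (Set.Ici t)}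

lemma Iio_Ici_split (Q : Measure ℝ) [IsProbabilityMeasure Q] (t : ℝ) :
    (Q (Set.Iio t)).toReal + (Q (Set.Ici t)).toReal = 1 := by
  have hdisj : Disjoint (Set.Iio t) (Set.Ici t) := by
    rw [Set.disjoint_left]
    intro x hx hx'
    exact absurd (Set.mem_Iio.1 hx) (not_lt.2 (Set.mem_Ici.1 hx'))
  rw [← ENNReal.toReal_add (measure_ne_top _ _) (measure_ne_top _ _),
    ← measure_union hdisj measurableSet_Ici, Set.Iio_union_Ici, measure_univ]
  rfl

/-- The set of minimizers of `t ↦ ∫ ρ_α(y, t) dQ(y)` is nonempty and coincides with the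
`α`-quantile set of `Q`. -/
theorem stmt0 (α : ℝ) (hα : α ∈ Set.Ioo (0 : ℝ) 1)
    (Q : Measure ℝ) [IsProbabilityMeasure Q]
    (hmoment : Integrable (fun y : ℝ => y) Q) :
    {t : ℝ | ∀ s : ℝ, (∫ y, pinball α y t ∂Q) ≤ ∫ y, pinball α y s ∂Q}.Nonempty ∧
    {t : ℝ | ∀ s : ℝ, (∫ y, pinball α y t ∂Q) ≤ ∫ y, pinball α y s ∂Q} = quantileSet α Q := by
  obtain ⟨hα0, hα1⟩ := hα
  have heq : {t : ℝ | ∀ s : ℝ, (∫ y, pinball α y t ∂Q) ≤ ∫ y, pinball α y s ∂Q}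
      = quantileSet α Q := by
    ext t
    have hsplit := Iio_Ici_split Q t
    constructor
    · intro hmin
      obtain ⟨h1, h2⟩ := quantile_of_min ⟨hα0, hα1⟩ Q hmoment hmin
      refine ⟨(ENNReal.ofReal_le_iff_le_toReal (measure_ne_top _ _)).2 h1, ?_⟩
      exact (ENNReal.ofReal_le_iff_le_toReal (measure_ne_top _ _)).2 (by linarith)
    · rintro ⟨h1, h2⟩
      have h1' : α ≤ (Q (Set.Iic t)).toReal :=
        (ENNReal.ofReal_le_iff_le_toReal (measure_ne_top _ _)).1 h1
      have h2' : 1 - α ≤ (Q (Set.Ici t)).toReal :=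
        (ENNReal.ofReal_le_iff_le_toReal (measure_ne_top _ _)).1 h2
      exact min_of_quantile hα0.le hα1.le Q hmoment h1' (by linarith)
  refine ⟨?_, heq⟩
  rw [heq]
  obtain ⟨t₀, hq1, hq2⟩ := quantile_exists ⟨hα0, hα1⟩ Q
  have hsplit := Iio_Ici_split Q t₀
  have hq2' : (Q (Set.Iio t₀)).toReal ≤ α := ENNReal.toReal_le_of_le_ofReal hα0.le hq2
  exact ⟨t₀, hq1, (ENNReal.ofReal_le_iff_le_toReal (measure_ne_top _ _)).2 (by linarith)⟩
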